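/- For all integers n: D_n² - D_{n-1}·D_{n+1} = D_{-n+3} = D_n·D_{n+3} - D_{n+1}·D_{n+2}, where D is the Padovan-type sequence extended to ℤ. -/

import Mathlib

theorem padovan_identity (D : ℤ → ℤ)
    (hrec : ∀ n : ℤ, D (n + 3) = D n + D (n + 1))
    (hm1 : D (-1) = -1) (h0 : D 0 = 1) (h1 : D 1 = 0) (h2 : D 2 = 0) :
    ∀ n : ℤ, D n ^ 2 - D (n - 1) * D (n + 1) = D (-n + 3) ∧
      D (-n + 3) = D n * D (n + 3) - D (n + 1) * D (n + 2) := by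
  have hD : ∀ a b : ℤ, a = b → D a = D b := fun a b h => by rw [h]
  have hr : ∀ n m p : ℤ, m = n + 1 → p = n + 3 → D p = D n + D m := by
    intro n m p hm hp
    rw [hp, hm]; exact hrec n
  -- recurrence for F n := D n * D (n+3) - D (n+1) * D (n+2)
  have Frec : ∀ n : ℤ, D n * D (n + 3) - D (n + 1) * D (n + 2) =
      (D (n + 2) * D (n + 5) - D (n + 3) * D (n + 4)) +
      (D (n + 3) * D (n + 6) - D (n + 4) * D (n + 5)) := by
    intro n
    have e3 : D (n + 3) = D n + D (n + 1) := hrec n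
    have e4 : D (n + 4) = D (n + 1) + D (n + 2) := hr (n+1) _ _ (by ring) (by ring)
    have e5 : D (n + 5) = D (n + 2) + D (n + 3) := hr (n+2) _ _ (by ring) (by ring)
    have e6 : D (n + 6) = D (n + 3) + D (n + 4) := hr (n+3) _ _ (by ring) (by ring)
    rw [e6, e5, e4, e3]; ring
  have d3 : D 3 = 1 := by have := hr 0 1 3 (by ring) (by ring); omega
  have d4 : D 4 = 0 := by have := hr 1 2 4 (by ring) (by ring); omega
  have d5 : D 5 = 1 := by have := hr 2 3 5 (by ring) (by ring); omega
  have main : ∀ n : ℤ, (D n * D (n + 3) - D (n + 1) * D (n + 2) = D (3 - n)) ∧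
      (D (n + 1) * D (n + 4) - D (n + 2) * D (n + 3) = D (2 - n)) ∧
      (D (n + 2) * D (n + 5) - D (n + 3) * D (n + 4) = D (1 - n)) := by
    intro n
    induction n using Int.induction_on with
    | zero =>
      norm_num [h0, h1, h2, d3, d4, d5]
    | succ k ih =>
      obtain ⟨i1, i2, i3⟩ := ih
      refine ⟨?_, ?_, ?_⟩
      · calc D (k + 1) * D (k + 1 + 3) - D (k + 1 + 1) * D (k + 1 + 2)
            = D (k + 1) * D (k + 4) - D (k + 2) * D (k + 3) := by ring_nf
          _ = D (2 - k) := i2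
          _ = D (3 - (k + 1)) := hD _ _ (by ring)
      · calc D (k + 1 + 1) * D (k + 1 + 4) - D (k + 1 + 2) * D (k + 1 + 3)
            = D (k + 2) * D (k + 5) - D (k + 3) * D (k + 4) := by ring_nf
          _ = D (1 - k) := i3
          _ = D (2 - (k + 1)) := hD _ _ (by ring)
      · have hf := Frec k
        rw [i1, i3] at hf
        -- hf : D (3 - k) = D (1 - k) + (D (k+3) * D (k+6) - D (k+4) * D (k+5))
        have hs : D (3 - k) = D (-k) + D (1 - k) := hr (-k) _ _ (by ring) (by ring)
        have e1 : D (k + 1 + 2) = D (k + 3) := hD _ _ (by ring)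
        have e2 : D (k + 1 + 5) = D (k + 6) := hD _ _ (by ring)
        have e3 : D (k + 1 + 3) = D (k + 4) := hD _ _ (by ring)
        have e4 : D (k + 1 + 4) = D (k + 5) := hD _ _ (by ring)
        have e5 : D (1 - (k + 1)) = D (-k) := hD _ _ (by ring)
        rw [e1, e2, e3, e4, e5]
        omega
    | pred k ih =>
      obtain ⟨i1, i2, i3⟩ := ih
      refine ⟨?_, ?_, ?_⟩
      · have hf := Frec (-k - 1)
        have e1 : D (-k - 1 + 2) = D (-k + 1) := hD _ _ (by ring)
        have e2 : D (-k - 1 + 5) = D (-k + 4) := hD _ _ (by ring)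
        have e3 : D (-k - 1 + 3) = D (-k + 2) := hD _ _ (by ring)
        have e4 : D (-k - 1 + 4) = D (-k + 3) := hD _ _ (by ring)
        have e5 : D (-k - 1 + 6) = D (-k + 5) := hD _ _ (by ring)
        rw [e1, e2, e3, e4, e5] at hf
        have j2 : D (2 - -(k:ℤ)) = D (k + 2) := hD _ _ (by ring)
        have j3 : D (1 - -(k:ℤ)) = D (k + 1) := hD _ _ (by ring)
        rw [i2, i3, j2, j3] at hf
        have hs : D (k + 4) = D (k + 1) + D (k + 2) := hr (k + 1) _ _ (by ring) (by ring)
        have g1 : D (3 - (-(k:ℤ) - 1)) = D (k + 4) := hD _ _ (by ring)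
        rw [e1, e3, g1, hs]
        omega
      · calc D (-k - 1 + 1) * D (-k - 1 + 4) - D (-k - 1 + 2) * D (-k - 1 + 3)
            = D (-k) * D (-k + 3) - D (-k + 1) * D (-k + 2) := by ring_nf
          _ = D (3 - -(k:ℤ)) := i1
          _ = D (2 - (-k - 1)) := hD _ _ (by ring)
      · calc D (-k - 1 + 2) * D (-k - 1 + 5) - D (-k - 1 + 3) * D (-k - 1 + 4)
            = D (-k + 1) * D (-k + 4) - D (-k + 2) * D (-k + 3) := by ring_nf
          _ = D (2 - -(k:ℤ)) := i2
          _ = D (1 - (-k - 1)) := hD _ _ (by ring)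
  intro n
  have key := (main n).1
  have hEF : D n ^ 2 - D (n - 1) * D (n + 1) = D n * D (n + 3) - D (n + 1) * D (n + 2) := by
    have e3 : D (n + 3) = D n + D (n + 1) := hrec n
    have e2 : D (n + 2) = D (n - 1) + D n := hr (n - 1) _ _ (by ring) (by ring)
    rw [e3, e2]; ring
  have hflip : D (-n + 3) = D (3 - n) := hD _ _ (by ring)
  constructor
  · rw [hEF, key, hflip]
  · rw [hflip, key]
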